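/- arXiv:1105.0794 — 5 statements merged into one kernel-verified Lean document; each statement's English description precedes it below -/
import Mathlib

section
/- (Compatibility lemma.) Let P₀, Q₀, P, Q ∈ K satisfy {P, Q₀} + {P₀, Q} = 0. Then ∂x( (∂ξ(Q₀)·P − ∂ξ(P₀)·Q)_{≤−1} ) = ∂ξ( (∂x(Q₀)·P − ∂x(P₀)·Q)_{≤−1} ); that is, the system ∂ξ(Φ) = (∂ξ(Q₀)·P − ∂ξ(P₀)·Q)_{≤−1}, ∂x(Φ) = (∂x(Q₀)·P − ∂x(P₀)·Q)_{≤−1} for an unknown Φ is compatible. -/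
/-! Symbols `f = Σ_{m ≤ M} a_m ξ^m` are modelled by Laurent series in `u = ξ⁻¹`,
i.e. `K = LaurentSeries R = HahnSeries ℤ R`; the coefficient of `ξ^m` sits at
exponent `-m` of `u`. -/

variable {R : Type*} [CommRing R] [Algebra ℚ R]

/-- The derivation `∂x`, applied coefficientwise. -/
noncomputable def dX (d : Derivation ℚ R R) (f : LaurentSeries R) : LaurentSeries R where
  coeff e := d (f.coeff e)
  isPWO_support' := f.isPWO_support.mono (fun e he => by
    simp only [Function.mem_support, HahnSeries.mem_support] at he ⊢
    intro h
    exact he (by rw [h, map_zero]))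

/-- The derivation `∂ξ = −u²·(d/du)`, so that `∂ξ(ξ^m) = m ξ^{m−1}`:
the term `a·u^{e-1} = a·ξ^{-(e-1)}` contributes `(1-e)·a·ξ^{-e} = (1-e)·a·u^e`. -/
noncomputable def dXi (f : LaurentSeries R) : LaurentSeries R where
  coeff e := (1 - e) • f.coeff (e - 1)
  isPWO_support' := by
    have hsub : Function.support (fun e : ℤ => (1 - e) • f.coeff (e - 1)) ⊆
        (fun a : ℤ => a + 1) '' f.support := by
      intro e he
      simp only [Function.mem_support] at he
      exact ⟨e - 1, fun h => he (by rw [h, smul_zero]), by ring⟩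
    have hmono : Monotone (fun a : ℤ => a + 1) := fun a b h => by simpa using h
    exact (f.isPWO_support.image_of_monotoneOn (hmono.monotoneOn _)).mono hsub

/-- Truncation `f ↦ (f)_{≤−1}`: keep exactly the terms with strictly negative
power of `ξ`, i.e. strictly positive exponent of `u`. -/
noncomputable def truncNeg (f : LaurentSeries R) : LaurentSeries R where
  coeff e := if 0 < e then f.coeff e else 0
  isPWO_support' := f.isPWO_support.mono (fun e he => by
    simp only [Function.mem_support, HahnSeries.mem_support] at he ⊢
    intro h
    apply he
    simp [h])


/-- The Poisson bracket `{a,b} = ∂ξ(a)·∂x(b) − ∂x(a)·∂ξ(b)`. -/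
noncomputable def poisson (d : Derivation ℚ R R) (a b : LaurentSeries R) : LaurentSeries R :=
  dXi a * dX d b - dX d a * dXi b

/-- The Euler-type operator `f ↦ Σ e·f_e u^e`, which preserves supports. -/
noncomputable def eulerOp (f : LaurentSeries R) : LaurentSeries R where
  coeff e := e • f.coeff e
  isPWO_support' := f.isPWO_support.mono (fun e he => by
    simp only [Function.mem_support, HahnSeries.mem_support] at he ⊢
    intro h
    exact he (by rw [h, smul_zero]))

lemma eulerOp_support (f : LaurentSeries R) : (eulerOp f).support ⊆ f.support := by
  intro e he
  simp only [HahnSeries.mem_support, eulerOp] at he ⊢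
  intro h
  exact he (by rw [h, smul_zero])

lemma eulerOp_mul (f g : LaurentSeries R) :
    eulerOp (f * g) = eulerOp f * g + f * eulerOp g := by
  ext e
  rw [HahnSeries.coeff_add,
    HahnSeries.coeff_mul_left' f.isPWO_support (eulerOp_support f),
    HahnSeries.coeff_mul_right' g.isPWO_support (eulerOp_support g)]
  show e • (f * g).coeff e = _
  rw [HahnSeries.coeff_mul, Finset.smul_sum, ← Finset.sum_add_distrib]
  refine Finset.sum_congr rfl fun ij hij => ?_
  obtain ⟨-, -, hsum⟩ := Finset.mem_addAntidiagonal.mp hij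
  show e • (f.coeff ij.1 * g.coeff ij.2) =
    ij.1 • f.coeff ij.1 * g.coeff ij.2 + f.coeff ij.1 * (ij.2 • g.coeff ij.2)
  rw [smul_mul_assoc, mul_smul_comm, ← add_smul, hsum]

lemma dXi_eq (f : LaurentSeries R) :
    dXi f = -(HahnSeries.single (1 : ℤ) (1 : R) * eulerOp f) := by
  ext e
  have hc : (HahnSeries.single (1 : ℤ) (1 : R) * eulerOp f).coeff e
      = (e - 1) • f.coeff (e - 1) := by
    have h := HahnSeries.coeff_single_mul_add (b := (1 : ℤ)) (r := (1 : R))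
      (x := eulerOp f) (a := e - 1)
    rw [show (e - 1) + (1 : ℤ) = e by ring, one_mul] at h
    rw [h]
    rfl
  rw [HahnSeries.coeff_neg, hc]
  show (1 - e) • f.coeff (e - 1) = -((e - 1) • f.coeff (e - 1))
  rw [← neg_smul]
  congr 1
  ring

lemma dXi_mul (f g : LaurentSeries R) : dXi (f * g) = dXi f * g + f * dXi g := by
  rw [dXi_eq, dXi_eq, dXi_eq, eulerOp_mul]
  ring

lemma dXi_sub (f g : LaurentSeries R) : dXi (f - g) = dXi f - dXi g := by
  ext e
  simp [dXi, HahnSeries.coeff_sub, smul_sub]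

lemma dX_sub (d : Derivation ℚ R R) (f g : LaurentSeries R) :
    dX d (f - g) = dX d f - dX d g := by
  ext e
  simp [dX, HahnSeries.coeff_sub]

lemma dX_support (d : Derivation ℚ R R) (f : LaurentSeries R) :
    (dX d f).support ⊆ f.support := by
  intro e he
  simp only [HahnSeries.mem_support, dX] at he ⊢
  intro h
  exact he (by rw [h, map_zero])

lemma dX_mul (d : Derivation ℚ R R) (f g : LaurentSeries R) :
    dX d (f * g) = dX d f * g + f * dX d g := by
  ext e
  rw [HahnSeries.coeff_add,
    HahnSeries.coeff_mul_left' f.isPWO_support (dX_support d f),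
    HahnSeries.coeff_mul_right' g.isPWO_support (dX_support d g)]
  show d ((f * g).coeff e) = _
  rw [HahnSeries.coeff_mul, map_sum, ← Finset.sum_add_distrib]
  refine Finset.sum_congr rfl fun ij _ => ?_
  show d (f.coeff ij.1 * g.coeff ij.2) =
    d (f.coeff ij.1) * g.coeff ij.2 + f.coeff ij.1 * d (g.coeff ij.2)
  rw [Derivation.leibniz, smul_eq_mul, smul_eq_mul]
  ring

lemma dX_dXi_comm (d : Derivation ℚ R R) (f : LaurentSeries R) :
    dX d (dXi f) = dXi (dX d f) := by
  ext e
  show d ((1 - e) • f.coeff (e - 1)) = (1 - e) • d (f.coeff (e - 1))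
  exact map_zsmul d.toLinearMap _ _

lemma dX_truncNeg (d : Derivation ℚ R R) (f : LaurentSeries R) :
    dX d (truncNeg f) = truncNeg (dX d f) := by
  ext e
  show d (if 0 < e then f.coeff e else 0) = (if 0 < e then d (f.coeff e) else 0)
  split <;> simp

lemma dXi_truncNeg (f : LaurentSeries R) : dXi (truncNeg f) = truncNeg (dXi f) := by
  ext e
  show (1 - e) • (if 0 < e - 1 then f.coeff (e - 1) else 0)
      = (if 0 < e then (1 - e) • f.coeff (e - 1) else 0)
  by_cases h1 : 0 < e - 1
  · rw [if_pos h1, if_pos (by omega)]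
  · rw [if_neg h1, smul_zero]
    by_cases h2 : 0 < e
    · have he : e = 1 := by omega
      subst he
      simp
    · rw [if_neg h2]

/-- compatibility lemma: if `{P, Q₀} + {P₀, Q} = 0` then
`∂x((∂ξ(Q₀)·P − ∂ξ(P₀)·Q)_{≤−1}) = ∂ξ((∂x(Q₀)·P − ∂x(P₀)·Q)_{≤−1})`,
i.e. the system `∂ξΦ = (∂ξ(Q₀)·P − ∂ξ(P₀)·Q)_{≤−1}`, `∂xΦ = (∂x(Q₀)·P − ∂x(P₀)·Q)_{≤−1}`
for an unknown `Φ` is compatible. -/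
theorem compatibility_lemma (d : Derivation ℚ R R) (P₀ Q₀ P Q : LaurentSeries R)
    (h : poisson d P Q₀ + poisson d P₀ Q = 0) :
    dX d (truncNeg (dXi Q₀ * P - dXi P₀ * Q))
      = dXi (truncNeg (dX d Q₀ * P - dX d P₀ * Q)) := by
  have key : dX d (dXi Q₀ * P - dXi P₀ * Q) = dXi (dX d Q₀ * P - dX d P₀ * Q) := by
    rw [dX_sub, dXi_sub, dX_mul, dX_mul, dXi_mul, dXi_mul, dX_dXi_comm, dX_dXi_comm]
    unfold poisson at h
    linear_combination -h
  rw [dX_truncNeg, dXi_truncNeg, key]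
end

section
/- (Integration step for the dressing recursion.) Take R := ℚ[[x]] (Mathlib's PowerSeries ℚ) with ∂x the formal derivative, and K as above. Let A, B ∈ K be supported in strictly negative powers of ξ (i.e. (A)_{≤−1} = A and (B)_{≤−1} = B) and satisfy the closedness condition ∂x(A) = ∂ξ(B). Then there exist a unique constant α ∈ ℚ and a unique X̃ ∈ K supported in strictly negative powers of ξ such that ∂ξ(X̃) + α·ξ⁻¹ = A and ∂x(X̃) = B. (Equivalently: Φ := α·log ξ + X̃ solves ∂ξΦ = A, ∂xΦ = B.) -/
/-! Symbols `f = Σ_{m ≤ M} a_m ξ^m` are modelled by Laurent series in `u = ξ⁻¹`,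
i.e. `K = LaurentSeries R = HahnSeries ℤ R`; the coefficient of `ξ^m` sits at
exponent `-m` of `u`. -/

variable {R : Type*} [CommRing R] [Algebra ℚ R]

lemma eq_C_of_derivative_eq_zero (f : PowerSeries ℚ)
    (h : PowerSeries.derivative ℚ f = 0) :
    f = PowerSeries.C (PowerSeries.constantCoeff f) := by
  ext n
  cases n with
  | zero => simp
  | succ n =>
    have h2 := congrArg (PowerSeries.coeff n) h
    rw [PowerSeries.coeff_derivative, map_zero] at h2
    have hne : ((n : ℚ) + 1) ≠ 0 := by positivity
    have := mul_eq_zero.mp h2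
    simp only [PowerSeries.coeff_succ_C]
    rcases this with h3 | h3
    · exact h3
    · exact absurd h3 hne

lemma truncNeg_coeff_eq_zero {f : LaurentSeries (PowerSeries ℚ)}
    (hf : truncNeg f = f) {e : ℤ} (he : ¬ 0 < e) : f.coeff e = 0 := by
  have := congrArg (fun g => HahnSeries.coeff g e) hf
  simp only [truncNeg, if_neg he] at this
  exact this.symm

/-- integration step for the dressing recursion: over `R = ℚ[[x]]`
with `∂x` the formal derivative, if `A, B` are supported in strictly negative powers
of `ξ` and satisfy the closedness condition `∂x(A) = ∂ξ(B)`, then there exist a unique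
constant `α ∈ ℚ` and a unique `X̃` supported in strictly negative powers of `ξ` with
`∂ξ(X̃) + α·ξ⁻¹ = A` and `∂x(X̃) = B` (here `α·ξ⁻¹` is the series whose only term is
the image of `α` in `R` times `u`). -/
theorem integration_step (A B : LaurentSeries (PowerSeries ℚ))
    (hA : truncNeg A = A) (hB : truncNeg B = B)
    (hclosed : dX (PowerSeries.derivative ℚ) A = dXi B) :
    ∃! p : ℚ × LaurentSeries (PowerSeries ℚ),
      truncNeg p.2 = p.2 ∧
      dXi p.2 + HahnSeries.single (1 : ℤ) (algebraMap ℚ (PowerSeries ℚ) p.1) = A ∧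
      dX (PowerSeries.derivative ℚ) p.2 = B := by
  have hcl : ∀ e : ℤ, PowerSeries.derivative ℚ (A.coeff e) = (1 - e) • B.coeff (e - 1) :=
    fun e => congrArg (fun g => HahnSeries.coeff g e) hclosed
  set α : ℚ := PowerSeries.constantCoeff (A.coeff 1) with hαdef
  have hA1 : A.coeff 1 = PowerSeries.C α := by
    apply eq_C_of_derivative_eq_zero
    have := hcl 1
    simpa using this
  have halg : algebraMap ℚ (PowerSeries ℚ) α = PowerSeries.C α := rfl
  set X : LaurentSeries (PowerSeries ℚ) :=
    { coeff := fun e => if 0 < e then (-(e : ℚ))⁻¹ • A.coeff (e + 1) else 0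
      isPWO_support' := by
        have hsub : Function.support
            (fun e : ℤ => if 0 < e then (-(e : ℚ))⁻¹ • A.coeff (e + 1) else 0) ⊆
            (fun a : ℤ => a - 1) '' A.support := by
          intro e he
          simp only [Function.mem_support] at he
          split_ifs at he with h
          · exact ⟨e + 1, fun h0 => he (by rw [h0, smul_zero]), by ring⟩
          · exact absurd rfl he
        have hmono : Monotone (fun a : ℤ => a - 1) := fun a b h => by simpa using h
        exact (A.isPWO_support.image_of_monotoneOn (hmono.monotoneOn _)).mono hsub } with hXdef
  have hXc : ∀ e : ℤ, X.coeff e = if 0 < e then (-(e : ℚ))⁻¹ • A.coeff (e + 1) else 0 :=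
    fun e => rfl
  refine ⟨⟨α, X⟩, ⟨?_, ?_, ?_⟩, ?_⟩
  · -- truncNeg X = X
    apply HahnSeries.coeff_injective
    funext e
    show (if 0 < e then X.coeff e else 0) = X.coeff e
    split_ifs with h
    · rfl
    · rw [hXc, if_neg h]
  · -- dXi X + single 1 (C α) = A
    apply HahnSeries.coeff_injective
    funext e
    show (1 - e) • X.coeff (e - 1)
        + (HahnSeries.single (1 : ℤ) (algebraMap ℚ (PowerSeries ℚ) α)).coeff e = A.coeff e
    by_cases h1 : e = 1
    · subst h1
      rw [HahnSeries.coeff_single_same, halg, hA1]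
      simp
    · rw [HahnSeries.coeff_single_of_ne h1, add_zero, hXc]
      by_cases h2 : 0 < e - 1
      · rw [if_pos h2]
        have he : e - 1 + 1 = e := by ring
        rw [he]
        have hcast : (-((e : ℤ) - 1 : ℤ) : ℚ) = ((1 - e : ℤ) : ℚ) := by push_cast; ring
        have hne : ((1 - e : ℤ) : ℚ) ≠ 0 := by
          have : e ≠ 1 := h1
          intro hc
          apply this
          have : (1 - e : ℤ) = 0 := by exact_mod_cast hc
          omega
        rw [← Int.cast_smul_eq_zsmul ℚ]
        push_cast
        have hr : (-((e : ℚ) - 1)) = (1 - (e : ℚ)) := by ring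
        rw [hr, smul_inv_smul₀ (by push_cast at hne; exact hne)]
      · rw [if_neg h2, smul_zero]
        have h3 : ¬ (0 : ℤ) < e := by omega
        rw [truncNeg_coeff_eq_zero hA h3]
  · -- dX X = B
    apply HahnSeries.coeff_injective
    funext e
    show PowerSeries.derivative ℚ (X.coeff e) = B.coeff e
    rw [hXc]
    by_cases h : 0 < e
    · rw [if_pos h, Derivation.map_smul, hcl (e + 1)]
      have he : e + 1 - 1 = e := by ring
      rw [he]
      have h2 : (1 - (e + 1) : ℤ) = -e := by ring
      rw [h2, ← Int.cast_smul_eq_zsmul ℚ]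
      push_cast
      rw [inv_smul_smul₀ (by
        intro hc
        have : (e : ℚ) = 0 := by linarith [neg_eq_zero.mp hc]
        exact h.ne' (by exact_mod_cast this))]
    · rw [if_neg h, map_zero, truncNeg_coeff_eq_zero hB h]
  · -- uniqueness
    rintro ⟨β, Y⟩ ⟨hY1, hY2, hY3⟩
    have hYc : ∀ e : ℤ, (1 - e) • Y.coeff (e - 1)
        + (HahnSeries.single (1 : ℤ) (algebraMap ℚ (PowerSeries ℚ) β)).coeff e = A.coeff e :=
      fun e => congrArg (fun g => HahnSeries.coeff g e) hY2
    have hβ : β = α := by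
      have := hYc 1
      rw [HahnSeries.coeff_single_same, hA1] at this
      simp only [sub_self, zero_smul, zero_add] at this
      have := congrArg (PowerSeries.constantCoeff) this
      simpa using this
    have hY : Y = X := by
      apply HahnSeries.coeff_injective
      funext e
      by_cases h : 0 < e
      · have := hYc (e + 1)
        have hne1 : (e + 1 : ℤ) ≠ 1 := by omega
        rw [HahnSeries.coeff_single_of_ne hne1, add_zero] at this
        have he : e + 1 - 1 = e := by ring
        rw [he] at this
        have h2 : (1 - (e + 1) : ℤ) = -e := by ring
        rw [h2, ← Int.cast_smul_eq_zsmul ℚ] at this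
        have hne : (-(e : ℚ)) ≠ 0 := by
          intro hc
          have : (e : ℚ) = 0 := by linarith [neg_eq_zero.mp hc]
          exact h.ne' (by exact_mod_cast this)
        rw [hXc, if_pos h, ← this]
        push_cast
        rw [inv_smul_smul₀ hne]
      · rw [truncNeg_coeff_eq_zero hY1 h, hXc, if_neg h]
    exact Prod.ext hβ hY
end

section
/- (Order estimate for the amplitude recursion of Aoki's exponential calculus.) Let h ∈ A, let w : ℕ → A satisfy w_k ∈ I^k for all k ≥ 1 (with w₀ ∈ A arbitrary), let ψ₀ ∈ A, and define ψ : ℕ → A recursively by ψ_{k+1} := (1/(k+1))·( h·δ(π(ψ_k)) + Σ_{ν=0}^{k} ( δ(ψ_ν)·π(w_{k−ν}) + π(ψ_ν)·δ(w_{k−ν}) ) ). Then ψ_k ∈ I^k for every k ≥ 1. (In the paper: ord_ξ ψ_k ≤ N + M − k, so that ψ(1) = Σ_k ψ_k makes sense as a formal symbol.) -/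
/-- order estimate for the amplitude recursion of Aoki's exponential calculus:
given `h ∈ A`, a family `w` with `w_k ∈ I^k` for `k ≥ 1`, and the recursion
`ψ_{k+1} = (1/(k+1))·(h·δ(π(ψ_k)) + Σ_{ν=0}^{k} (δ(ψ_ν)·π(w_{k−ν}) + π(ψ_ν)·δ(w_{k−ν})))`,
one has `ψ_k ∈ I^k` for all `k ≥ 1`.
`A` is a commutative ℚ-algebra, `I ⊆ A` an ideal, and `δ, π : A → A` two derivations
with `δ(A) ⊆ I`, `δ(I^m) ⊆ I^{m+1}` and `π(I^m) ⊆ I^m` for all `m ≥ 1`. -/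
theorem aoki_psi_recursion_order {A : Type*} [CommRing A] [Algebra ℚ A] (I : Ideal A)
    (δ π : A → A)
    (hδadd : ∀ a b : A, δ (a + b) = δ a + δ b)
    (hδmul : ∀ a b : A, δ (a * b) = δ a * b + a * δ b)
    (hπadd : ∀ a b : A, π (a + b) = π a + π b)
    (hπmul : ∀ a b : A, π (a * b) = π a * b + a * π b)
    (hδA : ∀ a : A, δ a ∈ I)
    (hδpow : ∀ m : ℕ, 1 ≤ m → ∀ a ∈ I ^ m, δ a ∈ I ^ (m + 1))
    (hπpow : ∀ m : ℕ, 1 ≤ m → ∀ a ∈ I ^ m, π a ∈ I ^ m)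
    (h : A) (w ψ : ℕ → A)
    (hwk : ∀ k : ℕ, 1 ≤ k → w k ∈ I ^ k)
    (hψ : ∀ k : ℕ, ψ (k + 1) = ((k + 1 : ℚ))⁻¹ •
      (h * δ (π (ψ k)) + ∑ ν ∈ Finset.range (k + 1),
        (δ (ψ ν) * π (w (k - ν)) + π (ψ ν) * δ (w (k - ν))))) :
    ∀ k : ℕ, 1 ≤ k → ψ k ∈ I ^ k := by
  -- auxiliary facts about w
  have hπw : ∀ m : ℕ, π (w m) ∈ I ^ m := by
    intro m
    match m with
    | 0 => simpa using Submodule.mem_top (x := π (w 0)) (R := A)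
    | Nat.succ n => exact hπpow _ (Nat.succ_le_succ (Nat.zero_le n)) _ (hwk _ (Nat.succ_le_succ (Nat.zero_le n)))
  have hδw : ∀ m : ℕ, δ (w m) ∈ I ^ (m + 1) := by
    intro m
    match m with
    | 0 => simpa using hδA (w 0)
    | Nat.succ n => exact hδpow _ (Nat.succ_le_succ (Nat.zero_le n)) _ (hwk _ (Nat.succ_le_succ (Nat.zero_le n)))
  have hmul : ∀ (a b : ℕ) (x y : A), x ∈ I ^ a → y ∈ I ^ b → x * y ∈ I ^ (a + b) := by
    intro a b x y hx hy
    rw [pow_add]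
    exact Ideal.mul_mem_mul hx hy
  intro k
  induction k using Nat.strong_induction_on with
  | _ k IH =>
    intro hk
    obtain ⟨k, rfl⟩ : ∃ m, k = m + 1 := ⟨k - 1, (Nat.succ_pred_eq_of_pos hk).symm⟩
    -- membership facts for ψ at smaller indices
    have hψmem : ∀ ν : ℕ, ν ≤ k → ψ ν ∈ I ^ ν ∨ ν = 0 := by
      intro ν hν
      match ν with
      | 0 => exact Or.inr rfl
      | Nat.succ m =>
        exact Or.inl (IH _ (Nat.lt_succ_of_le hν) (Nat.succ_le_succ (Nat.zero_le m)))
    have hδψ : ∀ ν : ℕ, ν ≤ k → δ (ψ ν) ∈ I ^ (ν + 1) := by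
      intro ν hν
      match ν with
      | 0 => simpa using hδA (ψ 0)
      | Nat.succ m =>
        exact hδpow _ (Nat.succ_le_succ (Nat.zero_le m)) _
          (IH _ (Nat.lt_succ_of_le hν) (Nat.succ_le_succ (Nat.zero_le m)))
    have hπψ : ∀ ν : ℕ, ν ≤ k → π (ψ ν) ∈ I ^ ν := by
      intro ν hν
      match ν with
      | 0 => simpa using Submodule.mem_top (x := π (ψ 0)) (R := A)
      | Nat.succ m =>
        exact hπpow _ (Nat.succ_le_succ (Nat.zero_le m)) _
          (IH _ (Nat.lt_succ_of_le hν) (Nat.succ_le_succ (Nat.zero_le m)))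
    rw [hψ k, Algebra.smul_def]
    apply Ideal.mul_mem_left
    apply Submodule.add_mem
    · -- h * δ (π (ψ k))
      apply Ideal.mul_mem_left
      match k with
      | 0 => simpa using hδA (π (ψ 0))
      | Nat.succ m =>
        exact hδpow _ (Nat.succ_le_succ (Nat.zero_le m)) _
          (hπψ _ le_rfl)
    · apply Submodule.sum_mem
      intro ν hν
      have hνk : ν ≤ k := Nat.lt_succ_iff.mp (Finset.mem_range.mp hν)
      apply Submodule.add_mem
      · have := hmul (ν + 1) (k - ν) _ _ (hδψ ν hνk) (hπw (k - ν))
        have he : ν + 1 + (k - ν) = k + 1 := by omega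
        rwa [he] at this
      · have := hmul ν (k - ν + 1) _ _ (hπψ ν hνk) (hδw (k - ν))
        have he : ν + (k - ν + 1) = k + 1 := by omega
        rwa [he] at this
end

section
/- (Leading ℏ-order of the Campbell–Hausdorff series.) Let L be a Lie algebra over ℚ with a decreasing filtration F : ℤ → Submodule ℚ L satisfying F_{j+1} ⊆ F_j and ⁅F_a, F_b⁆ ⊆ F_{a+b+1} for all a, b ∈ ℤ. Fix i ≥ 1, A ∈ F_{−1} and B ∈ F_{i−1}, and set X := A + B, Y := −A. Define c : {n ≥ 1} → L by the Campbell–Hausdorff recursion c_1 := X + Y and c_{n+1} := (1/(n+1))·( (1/2)·⁅X − Y, c_n⁆ + Σ_{p ≥ 1, 2p ≤ n} (B_{2p}/(2p)!) · Σ_{k_1 + ⋯ + k_{2p} = n, k_j ≥ 1} ⁅c_{k_1}, ⁅⋯, ⁅c_{k_{2p}}, X + Y⁆ ⋯⁆⁆ ), where B_{2p} are the Bernoulli numbers. Then for every n ≥ 1, c_n − (1/n!)·(ad A)^{n−1}(B) ∈ F_i. -/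
/-- leading ℏ-order of the Campbell–Hausdorff series: let `L` be a
Lie algebra over ℚ with a decreasing filtration `F` satisfying `⁅F_a, F_b⁆ ⊆ F_{a+b+1}`.
For `i ≥ 1`, `A ∈ F_{−1}`, `B ∈ F_{i−1}`, `X := A + B`, `Y := −A`, and `c` defined by the
Campbell–Hausdorff recursion, one has `c_n − (1/n!)·(ad A)^{n−1}(B) ∈ F_i` for all `n ≥ 1`. -/
theorem campbell_hausdorff_leading_order {L : Type*} [LieRing L] [LieAlgebra ℚ L]
    (F : ℤ → Submodule ℚ L)
    (hdec : ∀ j : ℤ, F (j + 1) ≤ F j)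
    (hbr : ∀ a b : ℤ, ∀ x ∈ F a, ∀ y ∈ F b, ⁅x, y⁆ ∈ F (a + b + 1))
    (i : ℤ) (hi : 1 ≤ i)
    (A B : L) (hA : A ∈ F (-1)) (hB : B ∈ F (i - 1))
    (c : ℕ → L)
    (hc1 : c 1 = (A + B) + (-A))
    (hcrec : ∀ n : ℕ, 1 ≤ n → c (n + 1) = ((n + 1 : ℚ))⁻¹ •
      ((2 : ℚ)⁻¹ • ⁅(A + B) - (-A), c n⁆ +
        ∑ p ∈ Finset.Icc 1 (n / 2), (bernoulli (2 * p) / (Nat.factorial (2 * p) : ℚ)) •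
          ∑ k ∈ (Finset.Nat.antidiagonalTuple (2 * p) n).filter (fun k => ∀ j, 1 ≤ k j),
            (List.ofFn (fun j => c (k j))).foldr (fun x y => ⁅x, y⁆) ((A + B) + (-A)))) :
    ∀ n : ℕ, 1 ≤ n →
      c n - ((Nat.factorial n : ℚ))⁻¹ • ((LieAlgebra.ad ℚ L A) ^ (n - 1)) B ∈ F i := by
  -- the filtration is antitone
  have hanti : ∀ a b : ℤ, a ≤ b → F b ≤ F a := by
    intro a b h
    obtain ⟨k, rfl⟩ : ∃ k : ℕ, b = a + k := ⟨(b - a).toNat, by omega⟩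
    clear h
    induction k with
    | zero => simp
    | succ k ihk =>
      have hstep : F (a + (k + 1 : ℕ)) ≤ F (a + k) := by
        rw [show a + ((k + 1 : ℕ) : ℤ) = (a + (k : ℕ)) + 1 by push_cast; ring]
        exact hdec _
      exact hstep.trans ihk
  -- iterated brackets with `A` stay in `F (i-1)`
  have hadpow : ∀ m : ℕ, ((LieAlgebra.ad ℚ L A) ^ m) B ∈ F (i - 1) := by
    intro m
    induction m with
    | zero => simpa using hB
    | succ m ih =>
      have heq : ((LieAlgebra.ad ℚ L A) ^ (m + 1)) B
          = ⁅A, ((LieAlgebra.ad ℚ L A) ^ m) B⁆ := by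
        rw [pow_succ']; rfl
      have h2 := hbr (-1) (i - 1) A hA _ ih
      rw [show (-1 : ℤ) + (i - 1) + 1 = i - 1 by ring] at h2
      rw [heq]; exact h2
  -- folded brackets
  have hfold : ∀ l : List L, (∀ x ∈ l, x ∈ F 0) → ∀ b ∈ F (i - 1),
      List.foldr (fun x y => ⁅x, y⁆) b l ∈ F (i - 1 + l.length) := by
    intro l
    induction l with
    | nil => intro _ b hb; simpa using hb
    | cons x t iht =>
      intro hx b hb
      have h1 := iht (fun y hy => hx y (List.mem_cons_of_mem _ hy)) b hb
      have h2 := hbr 0 (i - 1 + t.length) x (hx x List.mem_cons_self) _ h1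
      have h3 : (0 : ℤ) + (i - 1 + (t.length : ℤ)) + 1 = i - 1 + ((x :: t).length : ℤ) := by
        simp only [List.length_cons]; push_cast; try ring
      rw [h3] at h2
      exact h2
  intro n
  induction n using Nat.strong_induction_on with
  | _ n ih =>
    intro hn
    rcases Nat.lt_or_ge n 2 with h2 | h2
    · -- base case n = 1
      obtain rfl : n = 1 := by omega
      have hz : c 1 - ((Nat.factorial 1 : ℚ))⁻¹ • ((LieAlgebra.ad ℚ L A) ^ (1 - 1)) B = 0 := by
        rw [hc1]; simp [Nat.factorial]
      rw [hz]; exact (F i).zero_mem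
    · -- inductive step: n = M + 2
      obtain ⟨M, rfl⟩ : ∃ M, n = M + 2 := ⟨n - 2, by omega⟩
      have hN : 1 ≤ M + 1 := by omega
      -- c m ∈ F (i-1) for 1 ≤ m ≤ M+1
      have hcmem : ∀ m, 1 ≤ m → m ≤ M + 1 → c m ∈ F (i - 1) := by
        intro m h1 hm
        have h3 := ih m (by omega) h1
        have h4 : ((Nat.factorial m : ℚ))⁻¹ • ((LieAlgebra.ad ℚ L A) ^ (m - 1)) B ∈ F (i - 1) :=
          Submodule.smul_mem _ _ (hadpow _)
        have h5 := (F (i - 1)).add_mem (hanti (i - 1) i (by omega) h3) h4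
        simpa using h5
      rw [hcrec (M + 1) hN]
      set S := ∑ p ∈ Finset.Icc 1 ((M + 1) / 2),
          (bernoulli (2 * p) / (Nat.factorial (2 * p) : ℚ)) •
          ∑ k ∈ (Finset.Nat.antidiagonalTuple (2 * p) (M + 1)).filter (fun k => ∀ j, 1 ≤ k j),
            (List.ofFn (fun j => c (k j))).foldr (fun x y => ⁅x, y⁆) ((A + B) + (-A)) with hS
      -- the Bernoulli sum lies in F i
      have hT2 : S ∈ F i := by
        rw [hS]
        refine Submodule.sum_mem _ fun p hp => Submodule.smul_mem _ _
          (Submodule.sum_mem _ fun k hk => ?_)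
        rw [Finset.mem_filter, Finset.Nat.mem_antidiagonalTuple] at hk
        obtain ⟨hsum, hone⟩ := hk
        have hmem1 : ∀ x ∈ List.ofFn (fun j => c (k j)), x ∈ F 0 := by
          intro x hx
          rw [List.mem_ofFn] at hx
          obtain ⟨j, rfl⟩ := hx
          have hle : k j ≤ M + 1 := by
            calc k j ≤ ∑ j', k j' :=
              Finset.single_le_sum (fun _ _ => Nat.zero_le _) (Finset.mem_univ j)
            _ = M + 1 := hsum
          exact hanti 0 (i - 1) (by omega) (hcmem (k j) (hone j) hle)
        have hbase : (A + B) + (-A) ∈ F (i - 1) := by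
          have hb' : (A + B) + (-A) = B := by abel
          rw [hb']; exact hB
        have hf := hfold _ hmem1 _ hbase
        rw [List.length_ofFn] at hf
        have hp' : 1 ≤ p := (Finset.mem_Icc.mp hp).1
        exact hanti i (i - 1 + (2 * p : ℕ)) (by push_cast; omega) hf
      -- scalar identity for factorials
      have hsc : ((Nat.factorial (M + 2) : ℚ))⁻¹
          = (((M + 1 : ℕ) : ℚ) + 1)⁻¹ * ((Nat.factorial (M + 1) : ℚ))⁻¹ := by
        rw [show M + 2 = (M + 1) + 1 from rfl, Nat.factorial_succ]
        push_cast [mul_inv]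
        ring
      -- bracket of A with the leading term
      have hpow : ⁅A, ((LieAlgebra.ad ℚ L A) ^ M) B⁆ = ((LieAlgebra.ad ℚ L A) ^ (M + 1)) B := by
        rw [pow_succ']; rfl
      have h21 : M + 2 - 1 = M + 1 := rfl
      have h11 : M + 1 - 1 = M := rfl
      rw [h21]
      -- rewrite the goal as a single scalar multiple
      have hEq : (((M + 1 : ℕ) : ℚ) + 1)⁻¹ •
            ((2 : ℚ)⁻¹ • ⁅(A + B) - (-A), c (M + 1)⁆ + S)
          - ((Nat.factorial (M + 2) : ℚ))⁻¹ • ((LieAlgebra.ad ℚ L A) ^ (M + 1)) B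
          = (((M + 1 : ℕ) : ℚ) + 1)⁻¹ •
            (⁅A, c (M + 1) - ((Nat.factorial (M + 1) : ℚ))⁻¹ • ((LieAlgebra.ad ℚ L A) ^ M) B⁆
              + (2 : ℚ)⁻¹ • ⁅B, c (M + 1)⁆ + S) := by
        rw [hsc, lie_sub, lie_smul, hpow]
        simp only [sub_neg_eq_add, add_lie, mul_smul]
        module
      rw [hEq]
      refine Submodule.smul_mem _ _ ?_
      refine (F i).add_mem ((F i).add_mem ?_ ?_) hT2
      · -- ⁅A, c (M+1) - D (M+1)⁆ ∈ F i
        have hm := ih (M + 1) (by omega) hN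
        rw [h11] at hm
        have h6 := hbr (-1) i A hA _ hm
        rw [show (-1 : ℤ) + i + 1 = i by ring] at h6
        exact h6
      · -- (1/2) ⁅B, c (M+1)⁆ ∈ F i
        refine Submodule.smul_mem _ _ ?_
        have h7 := hbr (i - 1) (i - 1) B hB _ (hcmem (M + 1) hN le_rfl)
        exact hanti i ((i - 1) + (i - 1) + 1) (by omega) h7
end

section
/- (Order estimates for the phase recursion.) With the families Y^{(l)}_{k,n} and S^{(l)}_n defined by the recursion below, one has Y^{(l)}_{k,n} ∈ I^{k+l+1} for all l, k, n, and consequently S^{(l+1)}_n ∈ I^{l+1} for all l, n. (In the paper: ord_ξ Y^{(l)}_{k,n} ≤ −k−l−1 and ord_ξ S^{(l+1)}_n ≤ −l−1, so that S_n := Σ_l S^{(l)}_n makes sense as a formal power series in ξ⁻¹ with no nonnegative powers; this proves the regularity in ℏ of the WKB phase.) -/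
/-- order estimates for the phase recursion:
`Y^(l)_{k,n} ∈ I^{k+l+1}` for all `l, k, n`, and consequently `S^(l+1)_n ∈ I^{l+1}` for all `l, n`.
Context: `A` is a commutative ℚ-algebra, `I ⊆ A` an ideal, `δ, π : A → A` two
derivations with `δ(A) ⊆ I`, `δ(I^m) ⊆ I^{m+1}`, `π(I^m) ⊆ I^m` for `m ≥ 1`;
`X_n ∈ I` with `π(X_n) = 0`; and the families `S^(l)_n`, `Y^(l)_{k,n}` are defined
by `S^(0)_n = 0`, `Y^(l)_{0,n} = X_n` if `l = 0` and `0` otherwise,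
`Y^(l)_{k+1,n} = (1/(k+1))·(δ(π(Y^(l)_{k,n−1})) + Σ_{l'=0}^{l−1} Σ_{n'=0}^{n} δ(Y^(l')_{k,n'})·π(S^(l−l')_{n−n'}))`
(with the convention `Y^(l)_{k,−1} = 0`), and
`S^(l+1)_n = (1/(l+1))·Σ_{k=0}^{l+n} Y^(l)_{k,n}`. -/
theorem phase_recursion_order {A : Type*} [CommRing A] [Algebra ℚ A] (I : Ideal A)
    (δ π : A → A)
    (hδadd : ∀ a b : A, δ (a + b) = δ a + δ b)
    (hδmul : ∀ a b : A, δ (a * b) = δ a * b + a * δ b)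
    (hπadd : ∀ a b : A, π (a + b) = π a + π b)
    (hπmul : ∀ a b : A, π (a * b) = π a * b + a * π b)
    (hδA : ∀ a : A, δ a ∈ I)
    (hδpow : ∀ m : ℕ, 1 ≤ m → ∀ a ∈ I ^ m, δ a ∈ I ^ (m + 1))
    (hπpow : ∀ m : ℕ, 1 ≤ m → ∀ a ∈ I ^ m, π a ∈ I ^ m)
    (X : ℕ → A) (hX : ∀ n, X n ∈ I) (hπX : ∀ n, π (X n) = 0)
    (S : ℕ → ℕ → A) (Y : ℕ → ℕ → ℕ → A)
    (hS0 : ∀ n, S 0 n = 0)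
    (hY0 : ∀ l n, Y l 0 n = if l = 0 then X n else 0)
    (hYrec : ∀ l k n, Y l (k + 1) n = ((k + 1 : ℚ))⁻¹ •
      ((if n = 0 then 0 else δ (π (Y l k (n - 1)))) +
        ∑ l' ∈ Finset.range l, ∑ n' ∈ Finset.range (n + 1),
          δ (Y l' k n') * π (S (l - l') (n - n'))))
    (hSrec : ∀ l n, S (l + 1) n = ((l + 1 : ℚ))⁻¹ • ∑ k ∈ Finset.range (l + n + 1), Y l k n) :
    (∀ l k n : ℕ, Y l k n ∈ I ^ (k + l + 1)) ∧ (∀ l n : ℕ, S (l + 1) n ∈ I ^ (l + 1)) := by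
  have key : ∀ l : ℕ, ∀ k n : ℕ, Y l k n ∈ I ^ (k + l + 1) := by
    intro l
    induction l using Nat.strong_induction_on with
    | _ l ih =>
      have hSmem : ∀ m n : ℕ, 1 ≤ m → m ≤ l → S m n ∈ I ^ m := by
        intro m n hm1 hml
        obtain ⟨m', rfl⟩ : ∃ m', m = m' + 1 := ⟨m - 1, by omega⟩
        rw [hSrec, Algebra.smul_def]
        refine Ideal.mul_mem_left _ _ (Ideal.sum_mem _ fun k _ => ?_)
        exact Ideal.pow_le_pow_right (by omega) (ih m' (by omega) k n)
      intro k
      induction k with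
      | zero =>
        intro n
        rw [hY0]
        split_ifs with h
        · subst h; simpa using hX n
        · exact zero_mem _
      | succ k ihk =>
        intro n
        rw [hYrec, Algebra.smul_def]
        refine Ideal.mul_mem_left _ _ (add_mem ?_ (Ideal.sum_mem _ fun l' hl' =>
          Ideal.sum_mem _ fun n' _ => ?_))
        · split_ifs with h
          · exact zero_mem _
          · have h1 : k + 1 + l + 1 = (k + l + 1) + 1 := by ring
            rw [h1]
            exact hδpow _ (by omega) _ (hπpow _ (by omega) _ (ihk (n - 1)))
        · have hl'' : l' < l := Finset.mem_range.mp hl'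
          have ha : δ (Y l' k n') ∈ I ^ ((k + l' + 1) + 1) :=
            hδpow _ (by omega) _ (ih l' hl'' k n')
          have hb : π (S (l - l') (n - n')) ∈ I ^ (l - l') :=
            hπpow _ (by omega) _ (hSmem _ _ (by omega) (by omega))
          have h2 : k + 1 + l + 1 = ((k + l' + 1) + 1) + (l - l') := by omega
          rw [h2, pow_add]
          exact Ideal.mul_mem_mul ha hb
  refine ⟨key, fun l n => ?_⟩
  rw [hSrec, Algebra.smul_def]
  refine Ideal.mul_mem_left _ _ (Ideal.sum_mem _ fun k _ => ?_)
  exact Ideal.pow_le_pow_right (by omega) (key l k n)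
end
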